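/- Under the assumptions of the sampling theorem (‖w₁ − w₂‖ ≤ ε, all user representations f_i clipped to norm ≤ B), the softmax probabilities over any finite candidate subset S containing both v₁ and v₂ satisfy |log P(v₁) − log P(v₂)| ≤ 2εB/τ, where P(v) = softmax(max_i ⟨w_v, f_i⟩ / τ)_v. -/

import Mathlib

open Real

theorem sampling_log_prob_close {D M : ℕ} (hM : 0 < M) {S : Type*} [Fintype S]
    (w : S → EuclideanSpace ℝ (Fin D)) (f : Fin M → EuclideanSpace ℝ (Fin D))
    (ε B τ : ℝ) (hτ : 0 < τ) (hf : ∀ i, ‖f i‖ ≤ B)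
    (v₁ v₂ : S) (hw : ‖w v₁ - w v₂‖ ≤ ε) :
    |log (exp (Finset.univ.sup' (Finset.univ_nonempty_iff.mpr (Fin.pos_iff_nonempty.mp hM))
            (fun i => (inner ℝ (w v₁) (f i) : ℝ)) / τ) /
          ∑ z, exp (Finset.univ.sup' (Finset.univ_nonempty_iff.mpr (Fin.pos_iff_nonempty.mp hM))
            (fun i => (inner ℝ (w z) (f i) : ℝ)) / τ)) -
     log (exp (Finset.univ.sup' (Finset.univ_nonempty_iff.mpr (Fin.pos_iff_nonempty.mp hM))
            (fun i => (inner ℝ (w v₂) (f i) : ℝ)) / τ) /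
          ∑ z, exp (Finset.univ.sup' (Finset.univ_nonempty_iff.mpr (Fin.pos_iff_nonempty.mp hM))
            (fun i => (inner ℝ (w z) (f i) : ℝ)) / τ))| ≤ 2 * ε * B / τ := by
  have hne : (Finset.univ : Finset (Fin M)).Nonempty :=
    Finset.univ_nonempty_iff.mpr (Fin.pos_iff_nonempty.mp hM)
  set s : S → ℝ := fun v => Finset.univ.sup' hne (fun i => (inner ℝ (w v) (f i) : ℝ)) with hs
  have _ : Nonempty S := ⟨v₁⟩
  have hZ : (0:ℝ) < ∑ z, exp (s z / τ) :=
    Finset.sum_pos (fun z _ => exp_pos _) Finset.univ_nonempty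
  have hεB : (0:ℝ) ≤ ε * B := by
    have hi : (0:ℝ) ≤ B := le_trans (norm_nonneg _) (hf ⟨0, hM⟩)
    have hε : (0:ℝ) ≤ ε := le_trans (norm_nonneg _) hw
    positivity
  -- score Lipschitz bound
  have key : ∀ a b : S, ‖w a - w b‖ ≤ ε → s a ≤ s b + ε * B := by
    intro a b h
    apply Finset.sup'_le
    intro i _
    have h1 : (inner ℝ (w a) (f i) : ℝ) - inner ℝ (w b) (f i) ≤ ε * B := by
      have : (inner ℝ (w a) (f i) : ℝ) - inner ℝ (w b) (f i) = inner ℝ (w a - w b) (f i) := by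
        rw [inner_sub_left]
      rw [this]
      calc (inner ℝ (w a - w b) (f i) : ℝ) ≤ ‖w a - w b‖ * ‖f i‖ := real_inner_le_norm _ _
        _ ≤ ε * B := by
            apply mul_le_mul h (hf i) (norm_nonneg _) (le_trans (norm_nonneg _) h)
    have h2 : (inner ℝ (w b) (f i) : ℝ) ≤ s b :=
      Finset.le_sup' (fun i => (inner ℝ (w b) (f i) : ℝ)) (Finset.mem_univ i)
    linarith
  have h12 : s v₁ ≤ s v₂ + ε * B := key v₁ v₂ hw
  have h21 : s v₂ ≤ s v₁ + ε * B := by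
    apply key v₂ v₁
    rwa [norm_sub_rev]
  have hlog : ∀ v : S, log (exp (s v / τ) / ∑ z, exp (s z / τ))
      = s v / τ - log (∑ z, exp (s z / τ)) := by
    intro v
    rw [log_div (exp_pos _).ne' hZ.ne', log_exp]
  rw [hlog v₁, hlog v₂]
  have habs : s v₁ / τ - log (∑ z, exp (s z / τ)) - (s v₂ / τ - log (∑ z, exp (s z / τ)))
      = (s v₁ - s v₂) / τ := by ring
  rw [habs, abs_div, abs_of_pos hτ, div_le_div_iff_of_pos_right hτ]
  rw [abs_le]
  constructor <;> nlinarith
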